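/- Let h be bounded by b₀, and suppose for each α the weight function λ ↦ w_α(λ) = p_Λ(λ|α)/p_Λ(λ|α*) satisfies: p_Λ(λ|·) is differentiable in α with ‖∇_α p_Λ(λ|α)‖ ≤ b₄, p_Λ(λ|α) ≤ b₂, and p_Λ(λ|α*) ≥ b₃ > 0, for all λ ∈ K, α ∈ A. Then for any λ₁,…,λ_M ∈ K, the partial derivatives of the self-normalized estimator Ê_M(α) = [Σ_k h(λ_k)w_α(λ_k)]/[Σ_k w_α(λ_k)] with respect to each coordinate α_a are bounded in absolute value by 2 b₀ b₂ b₄ / b₃². -/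

import Mathlib

/-- Bound on the partial derivatives of the self-normalized importance
sampling estimator with respect to the hyperparameter coordinates. -/
theorem stmt_10 {q r : ℕ}
    (K : Set (EuclideanSpace ℝ (Fin q)))
    (b₀ b₂ b₃ b₄ : ℝ) (hb₀ : 0 < b₀) (hb₂ : 0 < b₂) (hb₃ : 0 < b₃)
    (hb₄ : 0 < b₄)
    (h : EuclideanSpace ℝ (Fin q) → ℝ)
    (hh : ∀ lam ∈ K, |h lam| ≤ b₀)
    (p : EuclideanSpace ℝ (Fin r) → EuclideanSpace ℝ (Fin q) → ℝ)
    (D : EuclideanSpace ℝ (Fin r) → EuclideanSpace ℝ (Fin q) →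
      (EuclideanSpace ℝ (Fin r) →L[ℝ] ℝ))
    (hderiv : ∀ α, ∀ lam ∈ K, HasFDerivAt (fun α' => p α' lam) (D α lam) α)
    (hDbdd : ∀ α, ∀ lam ∈ K, ‖D α lam‖ ≤ b₄)
    (hlower : ∀ α, ∀ lam ∈ K, b₃ ≤ p α lam)
    (hupper : ∀ α, ∀ lam ∈ K, p α lam ≤ b₂)
    (αstar : EuclideanSpace ℝ (Fin r))
    (M : ℕ) (hM : 0 < M) (lams : Fin M → EuclideanSpace ℝ (Fin q))
    (hlams : ∀ k, lams k ∈ K)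
    (Ehat : EuclideanSpace ℝ (Fin r) → ℝ)
    (hEhat : ∀ α, Ehat α
      = (∑ k, h (lams k) * (p α (lams k) / p αstar (lams k)))
        / (∑ k, p α (lams k) / p αstar (lams k))) :
    ∀ α, ∀ a : Fin r,
      |fderiv ℝ Ehat α (EuclideanSpace.single a 1)| ≤ 2 * b₀ * b₂ * b₄ / b₃ ^ 2 := by
  intro α a
  set v : EuclideanSpace ℝ (Fin r) := EuclideanSpace.single a 1 with hvdef
  have hvnorm : ‖v‖ = 1 := by
    rw [hvdef, EuclideanSpace.norm_single]; simp
  set c : Fin M → ℝ := fun k => p αstar (lams k) with hcdef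
  have hcb : ∀ k, b₃ ≤ c k := fun k => hlower αstar _ (hlams k)
  have hcpos : ∀ k, 0 < c k := fun k => lt_of_lt_of_le hb₃ (hcb k)
  have hcub : ∀ k, c k ≤ b₂ := fun k => hupper αstar _ (hlams k)
  set Nf : EuclideanSpace ℝ (Fin r) → ℝ :=
    fun α' => ∑ k, h (lams k) * (p α' (lams k) / c k) with hNfdef
  set Gf : EuclideanSpace ℝ (Fin r) → ℝ :=
    fun α' => ∑ k, p α' (lams k) / c k with hGfdef
  have hEeq : Ehat = fun α' => Nf α' * (Gf α')⁻¹ := by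
    funext α'; rw [hEhat α', div_eq_mul_inv]
  -- lower bound on the denominator sum
  have hterm_lb : ∀ α' k, b₃ / b₂ ≤ p α' (lams k) / c k := by
    intro α' k
    exact div_le_div₀ (le_trans hb₃.le (hlower α' _ (hlams k)))
      (hlower α' _ (hlams k)) (hcpos k) (hcub k)
  have hG_lb : ∀ α', (M : ℝ) * (b₃ / b₂) ≤ Gf α' := by
    intro α'
    calc (M : ℝ) * (b₃ / b₂) = ∑ _k : Fin M, b₃ / b₂ := by
          simp [Finset.sum_const, mul_comm]
      _ ≤ Gf α' := Finset.sum_le_sum fun k _ => hterm_lb α' k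
  have hMpos : (0 : ℝ) < M := by exact_mod_cast hM
  have hGpos : 0 < Gf α :=
    lt_of_lt_of_le (by positivity) (hG_lb α)
  -- derivatives of the two sums
  set N' : EuclideanSpace ℝ (Fin r) →L[ℝ] ℝ :=
    ∑ k, (h (lams k) / c k) • D α (lams k) with hN'def
  set G' : EuclideanSpace ℝ (Fin r) →L[ℝ] ℝ :=
    ∑ k, (c k)⁻¹ • D α (lams k) with hG'def
  have hN : HasFDerivAt Nf N' α := by
    have : Nf = fun α' => ∑ k, (h (lams k) / c k) * p α' (lams k) := by
      funext α'; exact Finset.sum_congr rfl fun k _ => by ring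
    rw [this, hN'def]
    exact HasFDerivAt.fun_sum fun k _ =>
      (hderiv α (lams k) (hlams k)).const_mul (h (lams k) / c k)
  have hG : HasFDerivAt Gf G' α := by
    have : Gf = fun α' => ∑ k, (c k)⁻¹ * p α' (lams k) := by
      funext α'; exact Finset.sum_congr rfl fun k _ => by ring
    rw [this, hG'def]
    exact HasFDerivAt.fun_sum fun k _ =>
      (hderiv α (lams k) (hlams k)).const_mul (c k)⁻¹
  have hinv : HasFDerivAt (fun α' => (Gf α')⁻¹)
      ((-ContinuousLinearMap.mulLeftRight ℝ ℝ (Gf α)⁻¹ (Gf α)⁻¹).comp G') α :=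
    (hasFDerivAt_inv' (ne_of_gt hGpos)).comp α hG
  have hE : HasFDerivAt Ehat
      (Nf α • ((-ContinuousLinearMap.mulLeftRight ℝ ℝ (Gf α)⁻¹ (Gf α)⁻¹).comp G')
        + (Gf α)⁻¹ • N') α := by
    rw [hEeq]; exact hN.mul hinv
  rw [hE.fderiv]
  have happ : (Nf α • ((-ContinuousLinearMap.mulLeftRight ℝ ℝ (Gf α)⁻¹ (Gf α)⁻¹).comp G')
        + (Gf α)⁻¹ • N') v
      = Nf α * (-((Gf α)⁻¹ * G' v * (Gf α)⁻¹)) + (Gf α)⁻¹ * N' v := by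
    simp [ContinuousLinearMap.add_apply, ContinuousLinearMap.smul_apply,
      ContinuousLinearMap.comp_apply, ContinuousLinearMap.neg_apply,
      ContinuousLinearMap.mulLeftRight_apply, smul_eq_mul]
  rw [happ]
  -- bounds on evaluations
  have hDv : ∀ k, |D α (lams k) v| ≤ b₄ := by
    intro k
    calc |D α (lams k) v| = ‖D α (lams k) v‖ := (Real.norm_eq_abs _).symm
      _ ≤ ‖D α (lams k)‖ * ‖v‖ := (D α (lams k)).le_opNorm v
      _ ≤ b₄ := by rw [hvnorm, mul_one]; exact hDbdd α _ (hlams k)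
  have hN'v : |N' v| ≤ (M : ℝ) * (b₀ * b₄ / b₃) := by
    have : N' v = ∑ k, (h (lams k) / c k) * D α (lams k) v := by
      rw [hN'def]; simp [ContinuousLinearMap.sum_apply, smul_eq_mul]
    rw [this]
    calc |∑ k, (h (lams k) / c k) * D α (lams k) v|
        ≤ ∑ k, |(h (lams k) / c k) * D α (lams k) v| := Finset.abs_sum_le_sum_abs _ _
      _ ≤ ∑ _k : Fin M, b₀ / b₃ * b₄ := by
          apply Finset.sum_le_sum; intro k _
          rw [abs_mul, abs_div]
          apply mul_le_mul _ (hDv k) (abs_nonneg _) (by positivity)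
          rw [abs_of_pos (hcpos k)]
          exact div_le_div₀ hb₀.le (hh _ (hlams k)) hb₃ (hcb k)
      _ = (M : ℝ) * (b₀ * b₄ / b₃) := by
          rw [Finset.sum_const, Finset.card_univ, Fintype.card_fin, nsmul_eq_mul]; ring
  have hG'v : |G' v| ≤ (M : ℝ) * (b₄ / b₃) := by
    have : G' v = ∑ k, (c k)⁻¹ * D α (lams k) v := by
      rw [hG'def]; simp [ContinuousLinearMap.sum_apply, smul_eq_mul]
    rw [this]
    calc |∑ k, (c k)⁻¹ * D α (lams k) v|
        ≤ ∑ k, |(c k)⁻¹ * D α (lams k) v| := Finset.abs_sum_le_sum_abs _ _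
      _ ≤ ∑ _k : Fin M, b₃⁻¹ * b₄ := by
          apply Finset.sum_le_sum; intro k _
          rw [abs_mul]
          apply mul_le_mul _ (hDv k) (abs_nonneg _) (by positivity)
          rw [abs_of_pos (inv_pos.mpr (hcpos k))]
          exact inv_anti₀ hb₃ (hcb k)
      _ = (M : ℝ) * (b₄ / b₃) := by
          rw [Finset.sum_const, Finset.card_univ, Fintype.card_fin, nsmul_eq_mul]; ring
  have hNα : |Nf α| ≤ b₀ * Gf α := by
    rw [hNfdef, hGfdef]
    calc |∑ k, h (lams k) * (p α (lams k) / c k)|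
        ≤ ∑ k, |h (lams k) * (p α (lams k) / c k)| := Finset.abs_sum_le_sum_abs _ _
      _ ≤ ∑ k, b₀ * (p α (lams k) / c k) := by
          apply Finset.sum_le_sum; intro k _
          rw [abs_mul]
          have hterm : (0:ℝ) < p α (lams k) / c k :=
            div_pos (lt_of_lt_of_le hb₃ (hlower α _ (hlams k))) (hcpos k)
          rw [abs_of_pos hterm]
          exact mul_le_mul_of_nonneg_right (hh _ (hlams k)) hterm.le
      _ = b₀ * ∑ k, p α (lams k) / c k := by rw [Finset.mul_sum]
  -- final arithmetic
  set S := Gf α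
  have hSinv_pos : 0 < S⁻¹ := inv_pos.mpr hGpos
  have hSinv : S⁻¹ ≤ b₂ / ((M : ℝ) * b₃) := by
    rw [inv_le_iff_one_le_mul₀] at *
    · calc (1 : ℝ) = ((M:ℝ) * (b₃/b₂)) * (b₂ / ((M:ℝ) * b₃)) := by
            field_simp
        _ ≤ S * (b₂ / ((M:ℝ)*b₃)) := by
            apply mul_le_mul_of_nonneg_right (hG_lb α) (by positivity)
        _ = b₂ / ((M:ℝ) * b₃) * S := mul_comm _ _
    · exact hGpos
  calc |Nf α * (-(S⁻¹ * G' v * S⁻¹)) + S⁻¹ * N' v|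
      ≤ |Nf α * (-(S⁻¹ * G' v * S⁻¹))| + |S⁻¹ * N' v| := abs_add_le _ _
    _ = |Nf α| * (S⁻¹ * |G' v| * S⁻¹) + S⁻¹ * |N' v| := by
        rw [abs_mul, abs_neg, abs_mul, abs_mul, abs_mul,
          abs_of_pos hSinv_pos]
    _ ≤ (b₀ * S) * (S⁻¹ * ((M : ℝ) * (b₄ / b₃)) * S⁻¹) + S⁻¹ * ((M : ℝ) * (b₀ * b₄ / b₃)) := by
        apply add_le_add
        · apply mul_le_mul hNα _ (by positivity) (by positivity)
          apply mul_le_mul_of_nonneg_right _ hSinv_pos.le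
          exact mul_le_mul_of_nonneg_left (hG'v) hSinv_pos.le
        · exact mul_le_mul_of_nonneg_left hN'v hSinv_pos.le
    _ = (2 * (M : ℝ) * (b₀ * b₄ / b₃)) * S⁻¹ := by
        field_simp
        ring
    _ ≤ (2 * (M : ℝ) * (b₀ * b₄ / b₃)) * (b₂ / ((M : ℝ) * b₃)) := by
        exact mul_le_mul_of_nonneg_left hSinv (by positivity)
    _ = 2 * b₀ * b₂ * b₄ / b₃ ^ 2 := by
        field_simp
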